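/- For all n ≥ 1 and k ≥ 0, the k-th derivative of x ↦ 1/(x)_n at x = 1 equals (-1)^k k! c_n^{(k)} / n!. -/

import Mathlib

open Finset

private lemma pf_aux (m : ℕ) : ∀ x : ℝ, 0 < x →
    ∑ j ∈ range (m+1), (-1:ℝ)^j * (m.choose j) / (x + j) =
      (m.factorial : ℝ) / ∏ i ∈ range (m+1), (x + i) := by
  induction m with
  | zero => intro x hx; simp
  | succ m ih =>
    intro x hx
    have hx1 : (0:ℝ) < x + 1 := by linarith
    have hA : (0:ℝ) < ∏ i ∈ range (m+1), (x + i) :=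
      Finset.prod_pos fun i _ => by positivity
    have hB : (0:ℝ) < ∏ i ∈ range (m+1), (x + 1 + i) :=
      Finset.prod_pos fun i _ => by positivity
    have hP : ∏ i ∈ range (m+2), (x + i) = (∏ i ∈ range (m+1), (x + i)) * (x + ((m:ℝ)+1)) := by
      rw [prod_range_succ]; push_cast; ring_nf
    have hP' : ∏ i ∈ range (m+2), (x + i) = x * ∏ i ∈ range (m+1), (x + 1 + i) := by
      rw [prod_range_succ']
      rw [show (x + ((0:ℕ):ℝ)) = x by simp, mul_comm]
      congr 1
      exact prod_congr rfl fun i _ => by push_cast; ring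
    have hAB : x * ∏ i ∈ range (m+1), (x + 1 + i)
        = (∏ i ∈ range (m+1), (x + i)) * (x + ((m:ℝ)+1)) := by rw [← hP', hP]
    have key : ∑ j ∈ range (m+2), (-1:ℝ)^j * ((m+1).choose j) / (x + j) =
        (∑ j ∈ range (m+1), (-1:ℝ)^j * (m.choose j) / (x + j))
          - ∑ j ∈ range (m+1), (-1:ℝ)^j * (m.choose j) / (x + 1 + j) := by
      rw [Finset.sum_range_succ' (fun j => (-1:ℝ)^j * ((m+1).choose j) / (x + j))]
      have h1 : ∀ j ∈ range (m+1), (-1:ℝ)^(j+1) * ((m+1).choose (j+1)) / (x + ((j+1:ℕ):ℝ))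
          = (-1:ℝ)^(j+1) * (m.choose (j+1)) / (x + ((j+1:ℕ):ℝ))
            - ((-1:ℝ)^j * (m.choose j) / (x + 1 + j)) := by
        intro j hj
        have hc : ((m+1).choose (j+1) : ℝ) = (m.choose (j+1) : ℝ) + (m.choose j : ℝ) := by
          rw [Nat.choose_succ_succ]; push_cast; ring
        have hxj : (x + (((j:ℕ)+1:ℕ):ℝ)) ≠ 0 := by push_cast; positivity
        rw [hc]
        push_cast at hxj ⊢
        rw [show x + 1 + (j:ℝ) = x + ((j:ℝ)+1) by ring]
        field_simp
        ring
      rw [Finset.sum_congr rfl h1, Finset.sum_sub_distrib]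
      have h2 : (∑ j ∈ range (m+1), (-1:ℝ)^(j+1) * (m.choose (j+1)) / (x + ((j+1:ℕ):ℝ)))
          + (-1:ℝ)^0 * (((m+1).choose 0 : ℕ):ℝ) / (x + ((0:ℕ):ℝ))
          = ∑ j ∈ range (m+1), (-1:ℝ)^j * (m.choose j) / (x + j) := by
        rw [show ((-1:ℝ)^0 * (((m+1).choose 0 : ℕ):ℝ) / (x + ((0:ℕ):ℝ)))
            = (-1:ℝ)^0 * ((m.choose 0 : ℕ):ℝ) / (x + ((0:ℕ):ℝ)) by simp]
        rw [← Finset.sum_range_succ' (fun j => (-1:ℝ)^j * (m.choose j) / (x + j)) (m+1)]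
        rw [Finset.sum_range_succ]
        simp [Nat.choose_eq_zero_of_lt (Nat.lt_succ_self m)]
      rw [sub_add_eq_add_sub, h2]
    rw [key, ih x hx, ih (x+1) hx1]
    rw [Nat.factorial_succ, hP]
    push_cast
    rw [div_sub_div _ _ hA.ne' hB.ne', div_eq_div_iff (by positivity) (by positivity)]
    linear_combination ((m.factorial:ℝ) * ∏ i ∈ range (m+1), (x + i)) * hAB

private lemma iteratedDeriv_eq_within {n : ℕ} {f : ℝ → ℝ} {s : Set ℝ} (hs : IsOpen s)
    {x : ℝ} (hx : x ∈ s) : iteratedDeriv n f x = iteratedDerivWithin n f s x := by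
  rw [iteratedDeriv_eq_iteratedFDeriv, iteratedDerivWithin_eq_iteratedFDerivWithin,
    iteratedFDerivWithin_of_isOpen n hs hx]

private lemma myIteratedDerivWithin_sum {ι : Type*} {u : Finset ι} {f : ι → ℝ → ℝ} {n : ℕ}
    {s : Set ℝ} {x : ℝ} (hs : UniqueDiffOn ℝ s) (hx : x ∈ s)
    (h : ∀ j ∈ u, ContDiffOn ℝ n (f j) s) :
    iteratedDerivWithin n (fun y => ∑ j ∈ u, f j y) s x
      = ∑ j ∈ u, iteratedDerivWithin n (f j) s x := by
  simp only [iteratedDerivWithin_eq_iteratedFDerivWithin]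
  rw [show (fun y => ∑ j ∈ u, f j y) = (∑ j ∈ u, f j) by ext; simp,
    iteratedFDerivWithin_sum_apply hs hx (fun j hj => h j hj x hx)]
  simp

private lemma prod_neg_one_sub (k : ℕ) :
    ∏ i ∈ range k, (-1 - (i:ℝ)) = (-1)^k * (k.factorial : ℝ) := by
  induction k with
  | zero => simp
  | succ k ih =>
    rw [prod_range_succ, ih, Nat.factorial_succ]
    push_cast
    ring

private lemma iter_inv_shift (k : ℕ) (c x : ℝ) :
    iteratedDeriv k (fun y : ℝ => (y + c)⁻¹) x
      = (-1:ℝ)^k * (k.factorial : ℝ) * (x + c)^(-1 - (k:ℤ)) := by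
  have h := congrFun (iteratedDeriv_comp_add_const k (Inv.inv : ℝ → ℝ) c) x
  rw [show (fun y : ℝ => (y + c)⁻¹) = (fun z : ℝ => (Inv.inv : ℝ → ℝ) (z + c)) from rfl, h,
    iteratedDeriv_eq_iterate, iter_deriv_inv]

/-- Roman harmonic number `c_n^{(k)}` as a real number. -/
noncomputable def romanHarmonic (n k : ℕ) : ℝ :=
  ∑ j ∈ Finset.Icc 1 n, (-1 : ℝ) ^ (j - 1) * (n.choose j) / (j : ℝ) ^ k

theorem iteratedDeriv_reciprocal_pochhammer_at_one (n k : ℕ) (hn : 1 ≤ n) :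
    iteratedDeriv k (fun y : ℝ => 1 / ∏ i ∈ Finset.range n, (y + (i : ℝ))) 1 =
      (-1 : ℝ) ^ k * (Nat.factorial k : ℝ) * romanHarmonic n k / (Nat.factorial n : ℝ) := by
  obtain ⟨m, rfl⟩ : ∃ m, n = m + 1 := ⟨n - 1, (Nat.succ_pred_eq_of_pos hn).symm⟩
  have hsOpen : IsOpen (Set.Ioi (0:ℝ)) := isOpen_Ioi
  have hsU : UniqueDiffOn ℝ (Set.Ioi (0:ℝ)) := hsOpen.uniqueDiffOn
  have h1 : (1:ℝ) ∈ Set.Ioi (0:ℝ) := by norm_num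
  set g : ℝ → ℝ := fun y =>
    ∑ j ∈ range (m+1), ((-1:ℝ)^j * (m.choose j) / (m.factorial : ℝ)) * (y + j)⁻¹ with hg
  have hm : (0:ℝ) < m.factorial := by positivity
  have hEq : Set.EqOn (fun y : ℝ => 1 / ∏ i ∈ Finset.range (m+1), (y + (i : ℝ))) g
      (Set.Ioi (0:ℝ)) := by
    intro x hx
    have hx : (0:ℝ) < x := hx
    have hA : (0:ℝ) < ∏ i ∈ range (m+1), (x + i) :=
      Finset.prod_pos fun i _ => by positivity
    have := pf_aux m x hx
    simp only [hg]
    have hsum : ∑ j ∈ range (m+1), ((-1:ℝ)^j * (m.choose j) / (m.factorial : ℝ)) * (x + j)⁻¹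
        = (∑ j ∈ range (m+1), (-1:ℝ)^j * (m.choose j) / (x + j)) / (m.factorial : ℝ) := by
      rw [Finset.sum_div]
      refine Finset.sum_congr rfl fun j _ => ?_
      have hxj : (0:ℝ) < x + j := by positivity
      field_simp
    simp only [hsum, this]
    field_simp
  have hCDinv : ∀ j : ℕ, ContDiffOn ℝ k (fun y : ℝ => (y + (j:ℝ))⁻¹) (Set.Ioi (0:ℝ)) := by
    intro j
    refine ContDiffOn.inv ((contDiff_id.add contDiff_const).contDiffOn) ?_
    intro x hx
    have hx : (0:ℝ) < x := hx
    positivity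
  have hCD : ∀ j ∈ range (m+1),
      ContDiffOn ℝ k (fun y : ℝ => ((-1:ℝ)^j * (m.choose j) / (m.factorial : ℝ)) * (y + j)⁻¹)
        (Set.Ioi (0:ℝ)) := by
    intro j _
    exact ContDiffOn.mul contDiffOn_const (hCDinv j)
  calc iteratedDeriv k (fun y : ℝ => 1 / ∏ i ∈ Finset.range (m+1), (y + (i : ℝ))) 1
      = iteratedDerivWithin k (fun y : ℝ => 1 / ∏ i ∈ Finset.range (m+1), (y + (i : ℝ)))
          (Set.Ioi (0:ℝ)) 1 := iteratedDeriv_eq_within hsOpen h1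
    _ = iteratedDerivWithin k g (Set.Ioi (0:ℝ)) 1 := iteratedDerivWithin_congr hEq h1
    _ = ∑ j ∈ range (m+1), iteratedDerivWithin k
          (fun y : ℝ => ((-1:ℝ)^j * (m.choose j) / (m.factorial : ℝ)) * (y + j)⁻¹)
          (Set.Ioi (0:ℝ)) 1 := myIteratedDerivWithin_sum hsU h1 hCD
    _ = ∑ j ∈ range (m+1), ((-1:ℝ)^j * (m.choose j) / (m.factorial : ℝ)) *
          ((-1:ℝ)^k * (k.factorial : ℝ) * ((1:ℝ) + j)^(-1 - (k:ℤ))) := by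
        refine Finset.sum_congr rfl fun j hj => ?_
        rw [iteratedDerivWithin_const_mul h1 hsU _ (hCDinv j 1 h1),
          ← iteratedDeriv_eq_within hsOpen h1, iter_inv_shift]
    _ = (-1 : ℝ) ^ k * (Nat.factorial k : ℝ) * romanHarmonic (m+1) k
          / (Nat.factorial (m+1) : ℝ) := by
        rw [romanHarmonic,
          show Finset.Icc 1 (m+1) = Finset.Ico 1 (m+2) by rw [← Finset.Ico_add_one_right_eq_Icc]; rfl,
          Finset.sum_Ico_eq_sum_range]
        simp only [Nat.add_sub_cancel_left, Nat.add_sub_cancel, show m + 2 - 1 = m + 1 from rfl]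
        rw [Finset.mul_sum, Finset.sum_div]
        refine Finset.sum_congr rfl fun j hj => ?_
        have hc : ((m:ℝ)+1) * (m.choose j) = ((m+1).choose (j+1) : ℝ) * ((j:ℝ)+1) := by
          exact_mod_cast Nat.add_one_mul_choose_eq m j
        have hz : ((1:ℝ)+j)^(-1 - (k:ℤ)) = (((1:ℝ)+j)^(k+1))⁻¹ := by
          rw [show (-1 - (k:ℤ)) = -(((k+1:ℕ)):ℤ) by push_cast; ring, zpow_neg, zpow_natCast]
        have hj1 : (0:ℝ) < 1 + j := by positivity
        have hmf : (0:ℝ) < m.factorial := by positivity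
        rw [hz, Nat.factorial_succ]
        push_cast
        rw [show 1 + j = j + 1 from Nat.add_comm 1 j]
        field_simp
        linear_combination
          (((1:ℝ)+j)^k) * hc
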